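/- The order topology on the set Idl(ℝ) of ideals of ℝ is Hausdorff but not compact and not discrete. -/

import Mathlib

/-- An ideal of a linearly ordered set: a nonempty downward-closed subset. -/
def IsIdeal {T : Type*} [LinearOrder T] (I : Set T) : Prop :=
  I.Nonempty ∧ ∀ ⦃x y : T⦄, x ≤ y → y ∈ I → x ∈ I

abbrev IdlR := {I : Set ℝ // IsIdeal I}

noncomputable instance : LinearOrder IdlR where
  __ := (inferInstance : PartialOrder IdlR)
  le_total I J := by
    by_cases h : (I : Set ℝ) ⊆ J
    · exact Or.inl h
    · right
      obtain ⟨x, hxI, hxJ⟩ := Set.not_subset.mp h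
      intro y hyJ
      rcases le_total y x with hyx | hxy
      · exact I.2.2 hyx hxI
      · exact absurd (J.2.2 hxy hyJ) hxJ
  toDecidableLE := Classical.decRel _

noncomputable instance : TopologicalSpace IdlR := Preorder.topology IdlR

instance : OrderTopology IdlR := ⟨rfl⟩

instance : Nonempty IdlR :=
  ⟨⟨Set.Iic 0, ⟨0, Set.self_mem_Iic⟩, fun _ _ h hy => le_trans h hy⟩⟩

def iicIdl (a : ℝ) : IdlR :=
  ⟨Set.Iic a, ⟨a, Set.self_mem_Iic⟩, fun _ _ h hy => le_trans h hy⟩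

lemma mem_iicIdl {a x : ℝ} : x ∈ (iicIdl a).1 ↔ x ≤ a := Set.mem_Iic

lemma iicIdl_lt {a b : ℝ} (hab : a < b) : iicIdl a < iicIdl b := by
  refine lt_of_le_of_ne (fun y hy => le_trans (mem_iicIdl.mp hy) hab.le) ?_
  intro he
  have : b ∈ (iicIdl a).1 := by
    rw [he]; exact mem_iicIdl.mpr le_rfl
  exact absurd (mem_iicIdl.mp this) (not_le.mpr hab)

/-- The order topology on the set of ideals of `ℝ` is Hausdorff,
not compact and not discrete. -/
theorem idl_real_hausdorff_not_compact_not_discrete :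
    @T2Space _ (Preorder.topology {I : Set ℝ // IsIdeal I}) ∧
    ¬ @CompactSpace _ (Preorder.topology {I : Set ℝ // IsIdeal I}) ∧
    ¬ @DiscreteTopology _ (Preorder.topology {I : Set ℝ // IsIdeal I}) := by
  refine ⟨inferInstanceAs (T2Space IdlR), ?_, ?_⟩
  · intro h
    have h' : CompactSpace IdlR := h
    obtain ⟨I, -, hI⟩ :=
      (isCompact_univ (X := IdlR)).exists_isLeast Set.univ_nonempty
    obtain ⟨x, hx⟩ := I.2.1
    have hJ : IsIdeal (Set.Iio (x - 1)) :=
      ⟨⟨x - 2, by simp [Set.mem_Iio]⟩, fun _ _ h hy => lt_of_le_of_lt h hy⟩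
    have hle := hI (Set.mem_univ (⟨_, hJ⟩ : IdlR))
    have : x ∈ Set.Iio (x - 1) := hle hx
    rw [Set.mem_Iio] at this
    linarith
  · intro h
    have h' : DiscreteTopology IdlR := h
    have hmem : {iicIdl 0} ∈ nhds (iicIdl 0) :=
      (isOpen_discrete _).mem_nhds rfl
    have hlow : IsIdeal (Set.Iio (0 : ℝ)) :=
      ⟨⟨-1, by norm_num⟩, fun _ _ h hy => lt_of_le_of_lt h hy⟩
    have hl : (⟨_, hlow⟩ : IdlR) < iicIdl 0 := by
      refine lt_of_le_of_ne (fun y hy => le_of_lt (Set.mem_Iio.mp hy)) ?_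
      intro he
      have : (0 : ℝ) ∈ Set.Iio (0 : ℝ) := by
        rw [show Set.Iio (0:ℝ) = (⟨_, hlow⟩ : IdlR).1 from rfl, he]
        exact mem_iicIdl.mpr le_rfl
      simp at this
    have hu : iicIdl 0 < iicIdl 1 := iicIdl_lt one_pos
    rw [mem_nhds_iff_exists_Ioo_subset' ⟨_, hl⟩ ⟨_, hu⟩] at hmem
    obtain ⟨l, u, ⟨hla, hau⟩, hsub⟩ := hmem
    have hnsub : ¬ (u : Set ℝ) ⊆ (iicIdl 0 : Set ℝ) := by
      intro hle
      exact absurd (le_antisymm (α := IdlR) hle hau.le) hau.ne'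
    obtain ⟨y, hyu, hy0⟩ := Set.not_subset.mp hnsub
    have hy0 : (0 : ℝ) < y := not_le.mp (fun hc => hy0 (mem_iicIdl.mpr hc))
    have hJ : iicIdl (y / 2) ∈ Set.Ioo l u := by
      constructor
      · exact hla.trans (iicIdl_lt (by linarith))
      · refine lt_of_le_of_ne
          (fun z hz => u.2.2 (le_trans (mem_iicIdl.mp hz) (by linarith)) hyu) ?_
        intro he
        have : y ∈ (iicIdl (y/2)).1 := by rw [he]; exact hyu
        rw [mem_iicIdl] at this
        linarith
    have heq := hsub hJ
    rw [Set.mem_singleton_iff] at heq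
    have : (y / 2 : ℝ) ∈ (iicIdl 0).1 := by
      rw [← heq]; exact mem_iicIdl.mpr le_rfl
    rw [mem_iicIdl] at this
    linarith
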